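/- Let τ⋄ := inf{t : ∀v∈G, τ_H(v) ≤ L_v(t)}, where τ_H is a strong stationary time for Q and the τ_H(v) are conditionally independent copies on the lamp graphs given the local times, and let τ_G(x) be a strong stationary time for the lazy walk on G started from x. Define τ⋄₂ := τ⋄ + τ_G(X_{τ⋄}), where after time τ⋄ the chain is restarted from (F_{τ⋄}, X_{τ⋄}) and run independently of the past. Then τ⋄₂ is a strong stationary time for the generalized lamplighter chain on H≀G, i.e. P_{(f₀,x₀)}[X⋄_t = (f,x), τ⋄₂ = t] = π_G(x)·(∏_{v∈G} π_H(f_v))·P_{(f₀,x₀)}[τ⋄₂ = t]. -/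

import Mathlib

open Finset

noncomputable section

open scoped Classical

section MarkovDefs

variable {V : Type*} [Fintype V] [DecidableEq V] [Nonempty V]
variable {W : Type*} [Fintype W] [DecidableEq W] [Nonempty W]

/-- `P` is a stochastic (transition) matrix. -/
def IsTransitionMatrix (P : Matrix V V ℝ) : Prop :=
  (∀ x y, 0 ≤ P x y) ∧ ∀ x, ∑ y, P x y = 1

/-- `π` is a (positive) stationary distribution for `P`. -/
def IsStationaryDist (P : Matrix V V ℝ) (π : V → ℝ) : Prop :=
  (∀ x, 0 < π x) ∧ (∑ x, π x = 1) ∧ ∀ y, ∑ x, π x * P x y = π y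

/-- Reversibility (detailed balance) of `P` with respect to `π`. -/
def IsReversibleMC (P : Matrix V V ℝ) (π : V → ℝ) : Prop :=
  ∀ x y, π x * P x y = π y * P y x

/-- Irreducibility of the chain `P`. -/
def IsIrreducibleMC (P : Matrix V V ℝ) : Prop :=
  ∀ x y, ∃ t : ℕ, 0 < (P ^ t) x y

/-- Aperiodicity of the chain `P`. -/
def IsAperiodicMC (P : Matrix V V ℝ) : Prop :=
  ∀ x : V, ∃ N : ℕ, ∀ n, N ≤ n → 0 < (P ^ n) x x

/-- The chain `P` is lazy. -/
def IsLazyMC (P : Matrix V V ℝ) : Prop := ∀ x, (1:ℝ)/2 ≤ P x x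

/-- The uniform distribution on a finite type. -/
def unifDist (α : Type*) [Fintype α] : α → ℝ := fun _ => (Fintype.card α : ℝ)⁻¹

/-- The second largest eigenvalue of a transition matrix: the supremum of the
eigenvalues different from `1`. -/
def secondEigenvalue (P : Matrix V V ℝ) : ℝ :=
  sSup {r : ℝ | r ≠ 1 ∧ ∃ φ : V → ℝ, φ ≠ 0 ∧ P.mulVec φ = r • φ}

/-- Relaxation time `1/(1-λ₂)`. -/
def relaxationTime (P : Matrix V V ℝ) : ℝ := 1 / (1 - secondEigenvalue P)

/-- Worst-case total variation distance from stationarity at time `t`. -/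
def tvFromStat (P : Matrix V V ℝ) (π : V → ℝ) (t : ℕ) : ℝ :=
  ⨆ x : V, (1/2) * ∑ y, |(P ^ t) x y - π y|

/-- The `ε`-mixing time (in total variation). -/
def mixingTime (P : Matrix V V ℝ) (π : V → ℝ) (ε : ℝ) : ℕ :=
  sInf {t : ℕ | tvFromStat P π t ≤ ε}

/-- Separation distance from initial state `x` at time `t`. -/
def sepDist (P : Matrix V V ℝ) (π : V → ℝ) (x : V) (t : ℕ) : ℝ :=
  ⨆ y : V, (1 - (P ^ t) x y / π y)

/-- Probability that the chain started at `x₀` follows the path `p`. -/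
def pathWeight (P : Matrix V V ℝ) (x₀ : V) {t : ℕ} (p : Fin (t+1) → V) : ℝ :=
  (if p 0 = x₀ then (1:ℝ) else 0) * ∏ i : Fin t, P (p i.castSucc) (p i.succ)

/-- `P_x[τ_y > t]`: the walk started at `x` avoids `y` up to time `t`. -/
def hitGT (P : Matrix V V ℝ) (x y : V) (t : ℕ) : ℝ :=
  ∑ p : Fin (t+1) → V, if ∀ i, p i ≠ y then pathWeight P x p else 0

/-- Expected hitting time `E_x[τ_y]`. -/
def expHit (P : Matrix V V ℝ) (x y : V) : ℝ := ∑' t : ℕ, hitGT P x y t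

/-- Maximal expected hitting time `t_hit`. -/
def maxHitTime (P : Matrix V V ℝ) : ℝ := ⨆ x : V, ⨆ y : V, expHit P x y

/-- `P_x[τ_cov > t]`: the walk started at `x` has not visited every state by time `t`. -/
def coverGT (P : Matrix V V ℝ) (x : V) (t : ℕ) : ℝ :=
  ∑ p : Fin (t+1) → V, if Function.Surjective p then 0 else pathWeight P x p

/-- Expected cover time `E_x[τ_cov]`. -/
def expCover (P : Matrix V V ℝ) (x : V) : ℝ := ∑' t : ℕ, coverGT P x t

/-- The cover time `t_cov`. -/
def coverTime (P : Matrix V V ℝ) : ℝ := ⨆ x : V, expCover P x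

/-- `P_w[R(w) > t]`: tail of the first return time to `w`. -/
def returnGT (P : Matrix V V ℝ) (w : V) (t : ℕ) : ℝ :=
  ∑ p : Fin (t+1) → V, if ∀ i, i ≠ 0 → p i ≠ w then pathWeight P w p else 0

/-- The degree of a vertex. -/
def graphDeg (G : SimpleGraph V) (x : V) : ℕ := (univ.filter fun y => G.Adj x y).card

/-- `G` is a regular graph. -/
def IsRegularGraph (G : SimpleGraph V) : Prop := ∃ d, ∀ x, graphDeg G x = d

/-- The lazy simple random walk on `G`. -/
def lazySRW (G : SimpleGraph V) : Matrix V V ℝ := fun x y =>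
  if x = y then 1/2 else if G.Adj x y then 1 / (2 * (graphDeg G x : ℝ)) else 0

/-- The generalized lamplighter (wreath product) transition matrix on `(V → W) × V`:
move the lamplighter according to `P` and refresh the lamps at the departure and
arrival vertices independently according to `Q` (a double `Q`-update upon holding). -/
def lamplighter (P : Matrix V V ℝ) (Q : Matrix W W ℝ) :
    Matrix ((V → W) × V) ((V → W) × V) ℝ := fun s s' =>
  if s.2 = s'.2 then
    if ∀ z, z ≠ s.2 → s.1 z = s'.1 z then P s.2 s'.2 * (Q * Q) (s.1 s.2) (s'.1 s.2) else 0
  else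
    if ∀ z, z ≠ s.2 → z ≠ s'.2 → s.1 z = s'.1 z then
      P s.2 s'.2 * Q (s.1 s.2) (s'.1 s.2) * Q (s.1 s'.2) (s'.1 s'.2)
    else 0

/-- The product stationary distribution `π⋄((f,x)) = π_G(x) ∏_v π_H(f_v)`. -/
def lampStat (πG : V → ℝ) (πH : W → ℝ) : ((V → W) × V) → ℝ :=
  fun s => πG s.2 * ∏ v, πH (s.1 v)

/-- The local time `L_v(t) = 2 Σ_{i≤t} 1(X_i = v) - δ_{X_0,v} - δ_{X_t,v}`, i.e. the
number of lamp-moves at `v` along the base path `p` up to time `t`. -/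
def localTime {t : ℕ} (p : Fin (t+1) → V) (v : V) : ℕ :=
  2 * (univ.filter fun i => p i = v).card
    - (if p 0 = v then 1 else 0) - (if p (Fin.last t) = v then 1 else 0)

/-- Truncation (for `s ≤ t`) of a path to the time-interval `[0,s]`. -/
def truncPath {t : ℕ} (p : Fin (t+1) → V) (s : ℕ) : Fin (s+1) → V :=
  fun i => p ⟨min (i : ℕ) t, Nat.lt_succ_of_le (Nat.min_le_right _ _)⟩

/-- Extension of a finite path to all times (constant after time `n`). -/
def extendPath {n : ℕ} (z : Fin (n+1) → W) : ℕ → W :=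
  fun i => z ⟨min i n, Nat.lt_succ_of_le (Nat.min_le_right _ _)⟩

/-- The history (list of states) of the trajectory `z` up to time `k`. -/
def ruleHist (z : ℕ → W) (k : ℕ) : List W := List.ofFn fun i : Fin (k+1) => z (i : ℕ)

/-- A randomized stopping rule: `r h` is the conditional probability of stopping
right now given that the history so far is `h` and we have not yet stopped. -/
def IsStoppingRule (r : List W → ℝ) : Prop := ∀ h, 0 ≤ r h ∧ r h ≤ 1

/-- `P[τ ≤ m | trajectory z]` for the stopping rule `r`. -/
def stopBy (r : List W → ℝ) (z : ℕ → W) (m : ℕ) : ℝ :=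
  1 - ∏ k ∈ Finset.range (m+1), (1 - r (ruleHist z k))

/-- `P[τ < m | trajectory z]` for the stopping rule `r`. -/
def stopLT (r : List W → ℝ) (z : ℕ → W) (m : ℕ) : ℝ :=
  1 - ∏ k ∈ Finset.range m, (1 - r (ruleHist z k))

/-- `P_{w₀}[X_t = y, τ = t]` for the chain `Q` and the stopping rule `r`. -/
def stopAtProb (Q : Matrix W W ℝ) (r : List W → ℝ) (w₀ : W) (t : ℕ) (y : W) : ℝ :=
  ∑ z : Fin (t+1) → W,
    if z (Fin.last t) = y then
      pathWeight Q w₀ z * (∏ k ∈ Finset.range t, (1 - r (ruleHist (extendPath z) k))) *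
        r (ruleHist (extendPath z) t)
    else 0

/-- `P_{w₀}[X_t = y, τ > t]` for the chain `Q` and the stopping rule `r`. -/
def notStopProbAt (Q : Matrix W W ℝ) (r : List W → ℝ) (w₀ : W) (t : ℕ) (y : W) : ℝ :=
  ∑ z : Fin (t+1) → W,
    if z (Fin.last t) = y then
      pathWeight Q w₀ z * ∏ k ∈ Finset.range (t+1), (1 - r (ruleHist (extendPath z) k))
    else 0

/-- `r` is (the stopping rule of) a strong stationary time for `(Q, π)`. -/
def IsSST (Q : Matrix W W ℝ) (π : W → ℝ) (r : List W → ℝ) : Prop :=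
  IsStoppingRule r ∧ ∀ w₀ t y, stopAtProb Q r w₀ t y = π y * ∑ y', stopAtProb Q r w₀ t y'

/-- `h` is a halting state for the stopping rule `r` and initial state `w₀`:
being at `h` at time `t` implies having stopped. -/
def IsHaltingState (Q : Matrix W W ℝ) (r : List W → ℝ) (w₀ h : W) : Prop :=
  ∀ t, notStopProbAt Q r w₀ t h = 0

/-- A separation-optimal strong stationary time: its tail equals the separation
distance for every starting state. -/
def IsSepOptimal (Q : Matrix W W ℝ) (π : W → ℝ) (r : List W → ℝ) : Prop :=
  ∀ w₀ t, sepDist Q π w₀ t = ∑ y, notStopProbAt Q r w₀ t y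

/-! Joint description of the generalized lamplighter chain: a base path `p` on `V`
together with independent `Q`-trajectories `z v` on each lamp coordinate `v`; the lamp
configuration at time `s` reads off each `z v` at the local time `L_v(s)`. -/

/-- Weight of a joint configuration (base path, lamp trajectories). -/
def jointWeight (P : Matrix V V ℝ) (Q : Matrix W W ℝ) (f₀ : V → W) (x₀ : V) {t : ℕ}
    (p : Fin (t+1) → V) (z : V → (Fin (2*t+1) → W)) : ℝ :=
  pathWeight P x₀ p * ∏ v, pathWeight Q (f₀ v) (z v)

/-- The lamp configuration at time `s` along the joint path: `F_s(v) = Z_v(L_v(s))`. -/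
def lampAt {t : ℕ} (p : Fin (t+1) → V) (z : V → (Fin (2*t+1) → W)) (s : ℕ) (v : V) : W :=
  z v ⟨min (localTime (truncPath p s) v) (2*t), Nat.lt_succ_of_le (Nat.min_le_right _ _)⟩

/-- `P_{(f₀,x₀)}[X⋄_t = (f,x), τ⋄ ≤ s]`, where
`τ⋄ = inf{u : ∀ v, τ_H(v) ≤ L_v(u)}` is built from conditionally independent copies
`τ_H(v)` (with stopping rule `r`) on the lamp coordinates. -/
def tauDmdLEProb (P : Matrix V V ℝ) (Q : Matrix W W ℝ) (r : List W → ℝ)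
    (f₀ : V → W) (x₀ : V) (t s : ℕ) (f : V → W) (x : V) : ℝ :=
  ∑ p : Fin (t+1) → V, ∑ z : V → (Fin (2*t+1) → W),
    if p (Fin.last t) = x ∧ ∀ v, lampAt p z t v = f v then
      jointWeight P Q f₀ x₀ p z *
        ∏ v, stopBy r (extendPath (z v)) (localTime (truncPath p s) v)
    else 0

/-- `P_{(f₀,x₀)}[X⋄_t = (f,x), τ⋄ = t]`. -/
def tauDmdEqProb (P : Matrix V V ℝ) (Q : Matrix W W ℝ) (r : List W → ℝ)
    (f₀ : V → W) (x₀ : V) (t : ℕ) (f : V → W) (x : V) : ℝ :=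
  tauDmdLEProb P Q r f₀ x₀ t t f x -
    if t = 0 then 0 else tauDmdLEProb P Q r f₀ x₀ t (t-1) f x

/-- `P_{(f₀,x₀)}[X_t = x, τ⋄ ≤ s]` (base-walk marginal). -/
def tauDmdLEBase (P : Matrix V V ℝ) (Q : Matrix W W ℝ) (r : List W → ℝ)
    (f₀ : V → W) (x₀ : V) (t s : ℕ) (x : V) : ℝ :=
  ∑ p : Fin (t+1) → V, ∑ z : V → (Fin (2*t+1) → W),
    if p (Fin.last t) = x then
      jointWeight P Q f₀ x₀ p z *
        ∏ v, stopBy r (extendPath (z v)) (localTime (truncPath p s) v)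
    else 0

/-- `P_{(f₀,x₀)}[X_t = x, τ⋄ = t]` (base-walk marginal). -/
def tauDmdEqBase (P : Matrix V V ℝ) (Q : Matrix W W ℝ) (r : List W → ℝ)
    (f₀ : V → W) (x₀ : V) (t : ℕ) (x : V) : ℝ :=
  tauDmdLEBase P Q r f₀ x₀ t t x -
    if t = 0 then 0 else tauDmdLEBase P Q r f₀ x₀ t (t-1) x

/-- `P_{(f₀,x₀)}[τ⋄ > t]`. -/
def tauDmdGTProb (P : Matrix V V ℝ) (Q : Matrix W W ℝ) (r : List W → ℝ)
    (f₀ : V → W) (x₀ : V) (t : ℕ) : ℝ :=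
  ∑ p : Fin (t+1) → V, ∑ z : V → (Fin (2*t+1) → W),
    jointWeight P Q f₀ x₀ p z * (1 - ∏ v, stopBy r (extendPath (z v)) (localTime p v))

/-- `P_{(f₀,x₀)}[X⋄_t = (f,x), τ⋄ > t]`. -/
def tauDmdGTProbAt (P : Matrix V V ℝ) (Q : Matrix W W ℝ) (r : List W → ℝ)
    (f₀ : V → W) (x₀ : V) (t : ℕ) (f : V → W) (x : V) : ℝ :=
  ∑ p : Fin (t+1) → V, ∑ z : V → (Fin (2*t+1) → W),
    if p (Fin.last t) = x ∧ ∀ v, lampAt p z t v = f v then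
      jointWeight P Q f₀ x₀ p z * (1 - ∏ v, stopBy r (extendPath (z v)) (localTime p v))
    else 0

/-- `P_{(g,y)}[X⋄_m = (f,x), τ_G = m]`, where the stopping rule `rG` acts on the
base path of the lamplighter chain. -/
def baseStopProb (P : Matrix V V ℝ) (Q : Matrix W W ℝ) (rG : List V → ℝ)
    (g : V → W) (y : V) (m : ℕ) (f : V → W) (x : V) : ℝ :=
  ∑ p : Fin (m+1) → V, ∑ z : V → (Fin (2*m+1) → W),
    if p (Fin.last m) = x ∧ ∀ v, lampAt p z m v = f v then
      jointWeight P Q g y p z *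
        (∏ k ∈ Finset.range m, (1 - rG (ruleHist (extendPath p) k))) *
        rG (ruleHist (extendPath p) m)
    else 0

/-- `P_{(f₀,x₀)}[X⋄_t = (f,x), τ⋄₂ = t]` for `τ⋄₂ = τ⋄ + τ_G(X_{τ⋄})`, where after
`τ⋄` the chain is restarted and run independently of the past. -/
def tauDmd2EqProb (P : Matrix V V ℝ) (Q : Matrix W W ℝ) (r : List W → ℝ) (rG : List V → ℝ)
    (f₀ : V → W) (x₀ : V) (t : ℕ) (f : V → W) (x : V) : ℝ :=
  ∑ s ∈ Finset.range (t+1), ∑ g : V → W, ∑ y : V,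
    tauDmdEqProb P Q r f₀ x₀ s g y * baseStopProb P Q rG g y (t - s) f x

/-- `P_x[τ > t]` for a stopping rule on the chain `P`. -/
def stopGTProb (P : Matrix V V ℝ) (r : List V → ℝ) (x : V) (t : ℕ) : ℝ :=
  ∑ y, notStopProbAt P r x t y

/-- `E_x[τ]` for a stopping rule on the chain `P`. -/
def expStopTime (P : Matrix V V ℝ) (r : List V → ℝ) (x : V) : ℝ :=
  ∑' t : ℕ, stopGTProb P r x t

/-- `P_x[X_τ = y]` for a stopping rule on the chain `P`. -/
def stopRuleDist (P : Matrix V V ℝ) (r : List V → ℝ) (x : V) (y : V) : ℝ :=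
  ∑' t : ℕ, stopAtProb P r x t y

/-- `t_stop`: the worst-case over starting states of the optimal expected duration of a
(randomized) stopping rule whose stopping distribution is the stationary one
(Lovász–Winkler). -/
def tStop (P : Matrix V V ℝ) (π : V → ℝ) : ℝ :=
  ⨆ x : V, sInf {e : ℝ | ∃ r : List V → ℝ, IsStoppingRule r ∧
    (∀ y, stopRuleDist P r x y = π y) ∧ expStopTime P r x = e}

/-- The path `p` visits every vertex by time `t/3`. -/
def coveredByThird {t : ℕ} (p : Fin (t+1) → V) : Prop :=
  ∀ v : V, ∃ i : Fin (t+1), (i : ℝ) ≤ (t : ℝ) / 3 ∧ p i = v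

/-! ### Auxiliary lemmas -/

section AuxLemmas

variable {V : Type*} [Fintype V] [DecidableEq V] [Nonempty V]
variable {W : Type*} [Fintype W] [DecidableEq W] [Nonempty W]

set_option linter.unusedSectionVars false

lemma telescope_prod (a : ℕ → ℝ) (n : ℕ) :
    1 - ∏ k ∈ Finset.range n, (1 - a k)
      = ∑ j ∈ Finset.range n, (∏ k ∈ Finset.range j, (1 - a k)) * a j := by
  induction n with
  | zero => simp
  | succ n ih =>
    rw [Finset.prod_range_succ, Finset.sum_range_succ, ← ih]; ring

/-- Sum over paths of length `N+1` as a sum over (init, last). -/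
lemma sum_snoc {N : ℕ} (F : (Fin (N+2) → W) → ℝ) :
    ∑ z : Fin (N+2) → W, F z = ∑ q : Fin (N+1) → W, ∑ a : W, F (Fin.snoc q a) := by
  rw [← Finset.sum_product']
  apply Finset.sum_nbij' (fun z => (Fin.init z, z (Fin.last (N+1))))
      (fun p => Fin.snoc p.1 p.2) <;> simp [Fin.snoc_init_self]

lemma pathWeight_snoc (Q : Matrix W W ℝ) (w0 : W) {N : ℕ} (q : Fin (N+1) → W) (a : W) :
    pathWeight Q w0 (Fin.snoc q a) = pathWeight Q w0 q * Q (q (Fin.last N)) a := by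
  unfold pathWeight
  rw [Fin.prod_univ_castSucc (f := fun i : Fin (N+1) => Q ((Fin.snoc q a : Fin (N+2) → W) i.castSucc) ((Fin.snoc q a : Fin (N+2) → W) i.succ))]
  have h0 : (Fin.snoc q a : Fin (N+2) → W) 0 = q 0 := by
    rw [show (0 : Fin (N+2)) = Fin.castSucc 0 by rfl, Fin.snoc_castSucc]
  rw [h0]
  have hstep : ∀ i : Fin N,
      Q ((Fin.snoc q a : Fin (N+2) → W) (Fin.castSucc (Fin.castSucc i)))
        ((Fin.snoc q a : Fin (N+2) → W) (Fin.castSucc i).succ)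
      = Q (q (Fin.castSucc i)) (q i.succ) := by
    intro i
    rw [Fin.snoc_castSucc, Fin.succ_castSucc, Fin.snoc_castSucc]
  have hlast :
      Q ((Fin.snoc q a : Fin (N+2) → W) (Fin.castSucc (Fin.last N)))
        ((Fin.snoc q a : Fin (N+2) → W) (Fin.last N).succ)
      = Q (q (Fin.last N)) a := by
    rw [show (Fin.last N).succ = Fin.last (N+1) by rfl, Fin.snoc_castSucc, Fin.snoc_last]
  rw [Finset.prod_congr rfl (fun i _ => hstep i), hlast]
  ring

/-- Truncation of a path to its first `m+1` entries. -/
def truncLE {m N : ℕ} (h : m ≤ N) (z : Fin (N+1) → W) : Fin (m+1) → W :=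
  fun i => z ⟨i, by omega⟩

lemma truncLE_self {m : ℕ} (z : Fin (m+1) → W) : truncLE (le_refl m) z = z := by
  funext i; simp [truncLE]

lemma truncLE_snoc {m N : ℕ} (h : m ≤ N) (q : Fin (N+1) → W) (a : W) :
    truncLE (show m ≤ N+1 by omega) (Fin.snoc q a) = truncLE h q := by
  funext i
  show (Fin.snoc q a : Fin (N+2) → W) ⟨i, by omega⟩ = q ⟨i, by omega⟩
  have : (⟨(i : ℕ), by omega⟩ : Fin (N+2)) = Fin.castSucc ⟨i, by omega⟩ := rfl
  rw [this, Fin.snoc_castSucc]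

lemma extendPath_truncLE {m N : ℕ} (h : m ≤ N) (z : Fin (N+1) → W) (i : ℕ) (hi : i ≤ m) :
    extendPath (truncLE h z) i = extendPath z i := by
  unfold extendPath truncLE
  congr 1
  ext
  simp [Nat.min_eq_left hi, Nat.min_eq_left (show i ≤ N by omega)]

lemma ruleHist_truncLE {m N : ℕ} (h : m ≤ N) (z : Fin (N+1) → W) (k : ℕ) (hk : k ≤ m) :
    ruleHist (extendPath (truncLE h z)) k = ruleHist (extendPath z) k := by
  unfold ruleHist
  congr 1
  funext i
  exact extendPath_truncLE h z i (by omega)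

lemma stopBy_truncLE (r : List W → ℝ) {m n N : ℕ} (hm : m ≤ n) (h : n ≤ N)
    (z : Fin (N+1) → W) :
    stopBy r (extendPath (truncLE h z)) m = stopBy r (extendPath z) m := by
  unfold stopBy
  congr 1
  refine Finset.prod_congr rfl fun k hk => ?_
  rw [ruleHist_truncLE h z k (by simp at hk; omega)]

/-- Summing out the steps of a path beyond time `m` (free end). -/
lemma sum_path_free (M : Matrix W W ℝ) (hM : ∀ x, ∑ y, M x y = 1) (w0 : W)
    {m N : ℕ} (h : m ≤ N) (Ψ : (Fin (m+1) → W) → ℝ) :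
    ∑ z : Fin (N+1) → W, pathWeight M w0 z * Ψ (truncLE h z)
      = ∑ z : Fin (m+1) → W, pathWeight M w0 z * Ψ z := by
  induction N, h using Nat.le_induction with
  | base => simp [truncLE_self]
  | succ N hN ih =>
    rw [sum_snoc (fun z => pathWeight M w0 z * Ψ (truncLE (by omega) z))]
    have : ∀ q : Fin (N+1) → W,
        ∑ a : W, pathWeight M w0 (Fin.snoc q a) * Ψ (truncLE (by omega) (Fin.snoc q a))
          = pathWeight M w0 q * Ψ (truncLE hN q) := by
      intro q
      have : ∀ a : W, pathWeight M w0 (Fin.snoc q a) * Ψ (truncLE (by omega) (Fin.snoc q a))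
          = pathWeight M w0 q * Ψ (truncLE hN q) * M (q (Fin.last N)) a := by
        intro a
        rw [pathWeight_snoc, truncLE_snoc hN q a]; ring
      rw [Finset.sum_congr rfl fun a _ => this a, ← Finset.mul_sum, hM]
      ring
    rw [Finset.sum_congr rfl fun q _ => this q, ih]

/-- Summing out the steps of a path beyond time `m`, with a pinned endpoint. -/
lemma sum_path_end (M : Matrix W W ℝ) (w0 : W)
    {m N : ℕ} (h : m ≤ N) (Ψ : (Fin (m+1) → W) → ℝ) (w : W) :
    ∑ z : Fin (N+1) → W,
        (if z (Fin.last N) = w then pathWeight M w0 z * Ψ (truncLE h z) else 0)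
      = ∑ y : W, (∑ z : Fin (m+1) → W,
          if z (Fin.last m) = y then pathWeight M w0 z * Ψ z else 0) * (M ^ (N - m)) y w := by
  induction N, h using Nat.le_induction generalizing w with
  | base =>
    simp only [Nat.sub_self, pow_zero, Matrix.one_apply, mul_ite, mul_one, mul_zero,
      Finset.sum_ite_eq' Finset.univ, Finset.mem_univ, if_true, truncLE_self]
  | succ N hN ih =>
    rw [sum_snoc (fun z => if z (Fin.last (N+1)) = w
        then pathWeight M w0 z * Ψ (truncLE (by omega) z) else 0)]
    have key : ∀ q : Fin (N+1) → W,
        (∑ a : W, if (Fin.snoc q a : Fin (N+2) → W) (Fin.last (N+1)) = w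
            then pathWeight M w0 (Fin.snoc q a) * Ψ (truncLE (by omega) (Fin.snoc q a)) else 0)
        = (pathWeight M w0 q * Ψ (truncLE hN q)) * M (q (Fin.last N)) w := by
      intro q
      have : ∀ a : W, (if (Fin.snoc q a : Fin (N+2) → W) (Fin.last (N+1)) = w
            then pathWeight M w0 (Fin.snoc q a) * Ψ (truncLE (by omega) (Fin.snoc q a)) else 0)
          = if a = w then (pathWeight M w0 q * Ψ (truncLE hN q)) * M (q (Fin.last N)) a else 0 := by
        intro a
        rw [Fin.snoc_last, pathWeight_snoc, truncLE_snoc hN q a]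
        by_cases ha : a = w <;> simp [ha] <;> ring
      rw [Finset.sum_congr rfl fun a _ => this a, Finset.sum_ite_eq' Finset.univ w
        (fun a => (pathWeight M w0 q * Ψ (truncLE hN q)) * M (q (Fin.last N)) a)]
      simp
    rw [Finset.sum_congr rfl fun q _ => key q]
    have exp : ∀ q : Fin (N+1) → W,
        (pathWeight M w0 q * Ψ (truncLE hN q)) * M (q (Fin.last N)) w
        = ∑ y'' : W, (if q (Fin.last N) = y''
            then pathWeight M w0 q * Ψ (truncLE hN q) else 0) * M y'' w := by
      intro q
      rw [Finset.sum_congr rfl fun y'' _ => by rw [ite_mul, zero_mul]]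
      rw [Finset.sum_ite_eq Finset.univ (q (Fin.last N))
        (fun y'' => pathWeight M w0 q * Ψ (truncLE hN q) * M y'' w)]
      simp
    rw [Finset.sum_congr rfl fun q _ => exp q, Finset.sum_comm]
    have : ∀ y'' : W,
        ∑ q : Fin (N+1) → W, (if q (Fin.last N) = y''
            then pathWeight M w0 q * Ψ (truncLE hN q) else 0) * M y'' w
        = (∑ y : W, (∑ z : Fin (m+1) → W,
            if z (Fin.last m) = y then pathWeight M w0 z * Ψ z else 0) * (M ^ (N - m)) y y'')
            * M y'' w := by
      intro y''
      rw [← Finset.sum_mul, ih y'']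
    rw [Finset.sum_congr rfl fun y'' _ => this y'']
    have hpow : N + 1 - m = (N - m) + 1 := by omega
    rw [hpow]
    have rhs : ∀ y : W, (∑ z : Fin (m+1) → W,
          if z (Fin.last m) = y then pathWeight M w0 z * Ψ z else 0) * (M ^ (N - m + 1)) y w
        = ∑ y'' : W, ((∑ z : Fin (m+1) → W,
            if z (Fin.last m) = y then pathWeight M w0 z * Ψ z else 0)
              * (M ^ (N - m)) y y'') * M y'' w := by
      intro y
      rw [pow_succ, Matrix.mul_apply, Finset.mul_sum]
      exact Finset.sum_congr rfl fun _ _ => by ring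
    rw [Finset.sum_congr rfl fun y _ => rhs y, Finset.sum_comm]
    refine Finset.sum_congr rfl fun y'' _ => ?_
    rw [Finset.sum_mul]

/-- Stationarity propagates to matrix powers. -/
lemma statPow {Q : Matrix W W ℝ} {πH : W → ℝ} (hπ : IsStationaryDist Q πH) (k : ℕ) (w : W) :
    ∑ a, πH a * (Q ^ k) a w = πH w := by
  induction k generalizing w with
  | zero => simp [Matrix.one_apply, Finset.sum_ite_eq' Finset.univ w πH]
  | succ k ih =>
    have : ∀ a, πH a * (Q ^ (k+1)) a w = ∑ b, (πH a * (Q ^ k) a b) * Q b w := by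
      intro a
      rw [pow_succ, Matrix.mul_apply, Finset.mul_sum]
      exact Finset.sum_congr rfl fun _ _ => by ring
    rw [Finset.sum_congr rfl fun a _ => this a, Finset.sum_comm]
    have : ∀ b, (∑ a, (πH a * (Q ^ k) a b) * Q b w) = πH b * Q b w := by
      intro b; rw [← Finset.sum_mul, ih b]
    rw [Finset.sum_congr rfl fun b _ => this b, hπ.2.2 w]

/-- The total mass `∑_{j ≤ m} P_{w₀}[τ = j]`. -/
def Cval (Q : Matrix W W ℝ) (r : List W → ℝ) (w0 : W) (m : ℕ) : ℝ :=
  ∑ j ∈ Finset.range (m+1), ∑ y, stopAtProb Q r w0 j y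

/-- `P_{w₀}[X_m = y', τ ≤ m] = π(y') P[τ ≤ m]` for an SST. -/
lemma keyB {Q : Matrix W W ℝ} {πH : W → ℝ} {r : List W → ℝ}
    (hπ : IsStationaryDist Q πH) (hr : IsSST Q πH r) (w0 : W) (m : ℕ) (y' : W) :
    ∑ z : Fin (m+1) → W,
        (if z (Fin.last m) = y' then pathWeight Q w0 z * stopBy r (extendPath z) m else 0)
      = πH y' * Cval Q r w0 m := by
  have expand : ∀ z : Fin (m+1) → W,
      (if z (Fin.last m) = y' then pathWeight Q w0 z * stopBy r (extendPath z) m else 0)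
      = ∑ j ∈ Finset.range (m+1),
          (if z (Fin.last m) = y' then pathWeight Q w0 z *
            ((∏ k ∈ Finset.range j, (1 - r (ruleHist (extendPath z) k))) *
              r (ruleHist (extendPath z) j)) else 0) := by
    intro z
    by_cases hz : z (Fin.last m) = y'
    · simp only [hz, if_true]
      rw [stopBy, telescope_prod, Finset.mul_sum]
    · simp [hz]
  rw [Finset.sum_congr rfl fun z _ => expand z, Finset.sum_comm]
  have term : ∀ j ∈ Finset.range (m+1),
      (∑ z : Fin (m+1) → W, if z (Fin.last m) = y' then pathWeight Q w0 z *
          ((∏ k ∈ Finset.range j, (1 - r (ruleHist (extendPath z) k))) *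
            r (ruleHist (extendPath z) j)) else 0)
      = πH y' * ∑ y, stopAtProb Q r w0 j y := by
    intro j hj
    have hjm : j ≤ m := by simp at hj; omega
    set Ψ : (Fin (j+1) → W) → ℝ := fun z' =>
      (∏ k ∈ Finset.range j, (1 - r (ruleHist (extendPath z') k))) *
        r (ruleHist (extendPath z') j) with hΨ
    have compat : ∀ z : Fin (m+1) → W,
        (∏ k ∈ Finset.range j, (1 - r (ruleHist (extendPath z) k))) *
          r (ruleHist (extendPath z) j) = Ψ (truncLE hjm z) := by
      intro z
      rw [hΨ]
      dsimp only
      rw [ruleHist_truncLE hjm z j (le_refl j)]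
      congr 1
      exact (Finset.prod_congr rfl fun k hk => by
        rw [ruleHist_truncLE hjm z k (by simp at hk; omega)])
    rw [Finset.sum_congr rfl fun z _ => by rw [compat z]]
    rw [sum_path_end Q w0 hjm Ψ y']
    have hstop : ∀ y : W,
        (∑ z : Fin (j+1) → W, if z (Fin.last j) = y then pathWeight Q w0 z * Ψ z else 0)
        = stopAtProb Q r w0 j y := by
      intro y
      rw [stopAtProb]
      refine Finset.sum_congr rfl fun z _ => ?_
      rw [hΨ]
      by_cases hz : z (Fin.last j) = y <;> simp [hz, mul_assoc]
    rw [Finset.sum_congr rfl (fun y _ => by rw [hstop y, hr.2 w0 j y] :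
      ∀ y ∈ Finset.univ, (∑ z : Fin (j+1) → W,
        if z (Fin.last j) = y then pathWeight Q w0 z * Ψ z else 0) * (Q ^ (m - j)) y y'
        = (πH y * ∑ y'', stopAtProb Q r w0 j y'') * (Q ^ (m - j)) y y')]
    have : ∀ y : W, πH y * (∑ y'', stopAtProb Q r w0 j y'') * (Q ^ (m - j)) y y'
        = (πH y * (Q ^ (m - j)) y y') * (∑ y'', stopAtProb Q r w0 j y'') := by
      intro y; ring
    rw [Finset.sum_congr rfl fun y _ => this y, ← Finset.sum_mul, statPow hπ]
  rw [Finset.sum_congr rfl term, Cval, Finset.mul_sum]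

/-- `P_{w₀}[X_n = w, τ ≤ m] = π(w) P[τ ≤ m]` inside a longer path, for `m ≤ n ≤ N`. -/
lemma key_T {Q : Matrix W W ℝ} {πH : W → ℝ} {r : List W → ℝ}
    (hQ : IsTransitionMatrix Q) (hπ : IsStationaryDist Q πH) (hr : IsSST Q πH r)
    (w0 : W) {m n N : ℕ} (hmn : m ≤ n) (hnN : n ≤ N) (w : W) :
    ∑ z : Fin (N+1) → W,
        (if z ⟨n, by omega⟩ = w then pathWeight Q w0 z * stopBy r (extendPath z) m else 0)
      = πH w * Cval Q r w0 m := by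
  set Ψ : (Fin (n+1) → W) → ℝ := fun z' =>
    if z' (Fin.last n) = w then stopBy r (extendPath z') m else 0 with hΨ
  have compat : ∀ z : Fin (N+1) → W,
      (if z ⟨n, by omega⟩ = w then pathWeight Q w0 z * stopBy r (extendPath z) m else 0)
      = pathWeight Q w0 z * Ψ (truncLE hnN z) := by
    intro z
    rw [hΨ]
    dsimp only
    have hend : truncLE hnN z (Fin.last n) = z ⟨n, by omega⟩ := rfl
    rw [hend, stopBy_truncLE r hmn hnN z]
    by_cases hz : z ⟨n, by omega⟩ = w <;> simp [hz]
  rw [Finset.sum_congr rfl fun z _ => compat z, sum_path_free Q hQ.2 w0 hnN Ψ]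
  have split : ∀ z : Fin (n+1) → W, pathWeight Q w0 z * Ψ z
      = (if z (Fin.last n) = w then pathWeight Q w0 z * stopBy r (extendPath z) m else 0) := by
    intro z
    rw [hΨ]
    by_cases hz : z (Fin.last n) = w <;> simp [hz]
  rw [Finset.sum_congr rfl fun z _ => split z]
  set Φ : (Fin (m+1) → W) → ℝ := fun z' => stopBy r (extendPath z') m with hΦ
  have compat2 : ∀ z : Fin (n+1) → W,
      (if z (Fin.last n) = w then pathWeight Q w0 z * stopBy r (extendPath z) m else 0)
      = (if z (Fin.last n) = w then pathWeight Q w0 z * Φ (truncLE hmn z) else 0) := by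
    intro z
    rw [hΦ]
    dsimp only
    rw [stopBy_truncLE r (le_refl m) hmn z]
  rw [Finset.sum_congr rfl fun z _ => compat2 z, sum_path_end Q w0 hmn Φ w]
  have : ∀ y ∈ Finset.univ, (∑ z : Fin (m+1) → W,
        if z (Fin.last m) = y then pathWeight Q w0 z * Φ z else 0) * (Q ^ (n - m)) y w
      = (πH y * Cval Q r w0 m) * (Q ^ (n - m)) y w := by
    intro y _
    rw [keyB hπ hr w0 m y]
  rw [Finset.sum_congr rfl this]
  have h2 : ∀ y ∈ Finset.univ, πH y * Cval Q r w0 m * (Q ^ (n - m)) y w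
      = (πH y * (Q ^ (n - m)) y w) * Cval Q r w0 m := fun y _ => by ring
  rw [Finset.sum_congr rfl h2, ← Finset.sum_mul, statPow hπ]

/-- `P_{w₀}[τ ≤ m] = Cval` inside a longer path. -/
lemma key_C {Q : Matrix W W ℝ} {πH : W → ℝ} {r : List W → ℝ}
    (hQ : IsTransitionMatrix Q) (hπ : IsStationaryDist Q πH) (hr : IsSST Q πH r)
    (w0 : W) {m N : ℕ} (hm : m ≤ N) :
    ∑ z : Fin (N+1) → W, pathWeight Q w0 z * stopBy r (extendPath z) m
      = Cval Q r w0 m := by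
  set Φ : (Fin (m+1) → W) → ℝ := fun z' => stopBy r (extendPath z') m with hΦ
  have compat : ∀ z : Fin (N+1) → W,
      pathWeight Q w0 z * stopBy r (extendPath z) m
      = pathWeight Q w0 z * Φ (truncLE hm z) := by
    intro z
    rw [hΦ]; dsimp only; rw [stopBy_truncLE r (le_refl m) hm z]
  rw [Finset.sum_congr rfl fun z _ => compat z, sum_path_free Q hQ.2 w0 hm Φ]
  have split : ∀ z : Fin (m+1) → W, pathWeight Q w0 z * Φ z
      = ∑ y : W, if z (Fin.last m) = y then pathWeight Q w0 z * Φ z else 0 := by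
    intro z
    rw [Finset.sum_ite_eq Finset.univ (z (Fin.last m))
      (fun _ => pathWeight Q w0 z * Φ z)]
    simp
  rw [Finset.sum_congr rfl fun z _ => split z, Finset.sum_comm]
  rw [Finset.sum_congr rfl fun y _ => keyB hπ hr w0 m y, ← Finset.sum_mul, hπ.2.1, one_mul]

/-- Sum over paths with a pinned intermediate point gives a matrix power. -/
lemma key_pow {Q : Matrix W W ℝ} (hQ : IsTransitionMatrix Q)
    (w0 : W) {n N : ℕ} (hn : n ≤ N) (w : W) :
    ∑ z : Fin (N+1) → W, (if z ⟨n, by omega⟩ = w then pathWeight Q w0 z else 0)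
      = (Q ^ n) w0 w := by
  set Ψ : (Fin (n+1) → W) → ℝ := fun z' => if z' (Fin.last n) = w then 1 else 0 with hΨ
  have compat : ∀ z : Fin (N+1) → W,
      (if z ⟨n, by omega⟩ = w then pathWeight Q w0 z else 0)
      = pathWeight Q w0 z * Ψ (truncLE hn z) := by
    intro z
    rw [hΨ]
    dsimp only
    have hend : truncLE hn z (Fin.last n) = z ⟨n, by omega⟩ := rfl
    rw [hend]
    by_cases hz : z ⟨n, by omega⟩ = w <;> simp [hz]
  rw [Finset.sum_congr rfl fun z _ => compat z, sum_path_free Q hQ.2 w0 hn Ψ]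
  set Φ : (Fin (0+1) → W) → ℝ := fun _ => 1 with hΦ
  have compat2 : ∀ z : Fin (n+1) → W, pathWeight Q w0 z * Ψ z
      = (if z (Fin.last n) = w then pathWeight Q w0 z * Φ (truncLE (Nat.zero_le n) z) else 0) := by
    intro z
    rw [hΨ, hΦ]
    by_cases hz : z (Fin.last n) = w <;> simp [hz]
  rw [Finset.sum_congr rfl fun z _ => compat2 z, sum_path_end Q w0 (Nat.zero_le n) Φ w]
  have base : ∀ y : W, (∑ z : Fin (0+1) → W,
      if z (Fin.last 0) = y then pathWeight Q w0 z * Φ z else 0)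
      = if w0 = y then 1 else 0 := by
    intro y
    rw [← Equiv.sum_comp (Equiv.funUnique (Fin 1) W).symm
      (fun z : Fin (0+1) → W => if z (Fin.last 0) = y then pathWeight Q w0 z * Φ z else 0)]
    rw [hΦ]
    simp only [Equiv.funUnique_symm_apply, Function.const_apply, pathWeight]
    simp only [Finset.univ_eq_empty, Finset.prod_empty, mul_one]
    by_cases h : w0 = y
    · subst h
      rw [Finset.sum_eq_single w0]
      · simp
      · intro b _ hb; simp [hb]
      · simp
    · rw [if_neg h, Finset.sum_eq_zero]
      intro b _
      by_cases hb : b = y <;> by_cases hb' : b = w0 <;> simp_all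
  rw [Finset.sum_congr rfl fun y _ => by rw [base y]]
  simp only [ite_mul, one_mul, zero_mul, Finset.sum_ite_eq, Finset.mem_univ, if_true,
    Nat.sub_zero]

/-- Total path mass is 1. -/
lemma sum_pw_one {Q : Matrix W W ℝ} (hQ : IsTransitionMatrix Q) (w0 : W) (N : ℕ) :
    ∑ z : Fin (N+1) → W, pathWeight Q w0 z = 1 := by
  have : ∀ z : Fin (N+1) → W, pathWeight Q w0 z
      = pathWeight Q w0 z * (fun _ : Fin (0+1) → W => (1:ℝ)) (truncLE (Nat.zero_le N) z) := by
    intro z; simp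
  rw [Finset.sum_congr rfl fun z _ => this z,
    sum_path_free Q hQ.2 w0 (Nat.zero_le N) (fun _ => 1)]
  rw [← Equiv.sum_comp (Equiv.funUnique (Fin 1) W).symm
    (fun z : Fin (0+1) → W => pathWeight Q w0 z * 1)]
  simp only [Equiv.funUnique_symm_apply, Function.const_apply, pathWeight, mul_one]
  simp
  exact (Finset.sum_ite_eq' Finset.univ w0 (fun _ => (1:ℝ))).trans (by simp)

lemma localTime_le {u : ℕ} (q : Fin (u+1) → V) (v : V) : localTime q v ≤ 2*u := by
  by_cases hall : ∀ i, q i = v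
  · have hc : (Finset.univ.filter fun i : Fin (u+1) => q i = v) = Finset.univ :=
      Finset.filter_true_of_mem fun i _ => hall i
    unfold localTime
    rw [hc, if_pos (hall 0), if_pos (hall (Fin.last u))]
    simp only [Finset.card_univ, Fintype.card_fin]
    omega
  · push_neg at hall
    obtain ⟨i0, hi0⟩ := hall
    have hne : (Finset.univ.filter fun i : Fin (u+1) => q i = v) ≠ Finset.univ := by
      intro h
      have : i0 ∈ Finset.univ.filter fun i : Fin (u+1) => q i = v := by
        rw [h]; exact Finset.mem_univ i0
      exact hi0 (Finset.mem_filter.mp this).2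
    have hlt : (Finset.univ.filter fun i : Fin (u+1) => q i = v).card < u + 1 := by
      have := Finset.card_lt_card (Finset.ssubset_univ_iff.mpr hne)
      simpa using this
    unfold localTime
    split_ifs <;> omega

lemma localTime_trunc_mono {u : ℕ} (p : Fin (u+2) → V) (v : V) :
    localTime (truncPath p u) v ≤ localTime p v := by
  set q := truncPath p u with hqdef
  have hq : ∀ i : Fin (u+1), q i = p i.castSucc := by
    intro i
    show p ⟨min i.val (u+1), _⟩ = p i.castSucc
    congr 1
    ext
    simp [Nat.min_eq_left i.isLt.le]
  have hC : (Finset.univ.filter fun i : Fin (u+2) => p i = v).card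
      = (Finset.univ.filter fun i : Fin (u+1) => q i = v).card
        + (if p (Fin.last (u+1)) = v then 1 else 0) := by
    rw [Finset.card_filter, Finset.card_filter, Fin.sum_univ_castSucc]
    congr 1
    exact Finset.sum_congr rfl fun i _ => by rw [hq i]
  have h0 : q 0 = p 0 := by rw [hq 0]; rfl
  have hl : q (Fin.last u) = p (Fin.castSucc (Fin.last u)) := hq _
  unfold localTime
  rw [hC, h0, hl]
  split_ifs <;> omega

lemma ite_forall_prod {cond : V → Prop} [DecidablePred cond] (F : V → ℝ) :
    (if ∀ v, cond v then ∏ v, F v else 0) = ∏ v, (if cond v then F v else 0) := by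
  by_cases h : ∀ v, cond v
  · rw [if_pos h]
    exact Finset.prod_congr rfl fun v _ => (if_pos (h v)).symm
  · rw [if_neg h]
    push_neg at h
    obtain ⟨v0, hv0⟩ := h
    exact (Finset.prod_eq_zero (Finset.mem_univ v0) (if_neg hv0 : (if cond v0 then F v0 else 0) = 0)).symm

lemma sum_pi_prod {A : Type*} [Fintype A] [DecidableEq A] (F : V → A → ℝ) :
    ∑ g : V → A, ∏ v, F v (g v) = ∏ v, ∑ a, F v a := by
  rw [Finset.prod_univ_sum (fun _ : V => (Finset.univ : Finset A)) F, Fintype.piFinset_univ]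

/-- At time `τ⋄` the lamps are stationary (LE version). -/
lemma LEProb_factor (P : Matrix V V ℝ) {Q : Matrix W W ℝ} {πH : W → ℝ} {r : List W → ℝ}
    (hQ : IsTransitionMatrix Q) (hπ : IsStationaryDist Q πH) (hr : IsSST Q πH r)
    (f₀ : V → W) (x₀ : V) (s s' : ℕ)
    (hmono : ∀ (p : Fin (s+1) → V) (v : V),
      localTime (truncPath p s') v ≤ localTime (truncPath p s) v)
    (g : V → W) (y : V) :
    tauDmdLEProb P Q r f₀ x₀ s s' g y
      = (∏ v, πH (g v)) * tauDmdLEBase P Q r f₀ x₀ s s' y := by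
  unfold tauDmdLEProb tauDmdLEBase jointWeight lampAt
  rw [Finset.mul_sum]
  refine Finset.sum_congr rfl fun p _ => ?_
  have hle2 : ∀ v, localTime (truncPath p s) v ≤ 2*s := fun v => localTime_le _ v
  by_cases hp : p (Fin.last s) = y
  swap
  · rw [Finset.sum_eq_zero fun z _ => by simp [hp], Finset.sum_eq_zero fun z _ => by simp [hp]]
    ring
  · simp only [hp, true_and, if_true]
    have lhs_eq : ∀ z : V → (Fin (2*s+1) → W),
        (if (∀ v, z v ⟨min (localTime (truncPath p s) v) (2*s),
              Nat.lt_succ_of_le (Nat.min_le_right _ _)⟩ = g v) then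
          (pathWeight P x₀ p * ∏ v, pathWeight Q (f₀ v) (z v)) *
            ∏ v, stopBy r (extendPath (z v)) (localTime (truncPath p s') v) else 0)
        = pathWeight P x₀ p * ∏ v,
            (if z v ⟨min (localTime (truncPath p s) v) (2*s),
                Nat.lt_succ_of_le (Nat.min_le_right _ _)⟩ = g v then
              pathWeight Q (f₀ v) (z v) *
                stopBy r (extendPath (z v)) (localTime (truncPath p s') v) else 0) := by
      intro z
      rw [← ite_forall_prod]
      by_cases hz : ∀ v, z v ⟨min (localTime (truncPath p s) v) (2*s),
          Nat.lt_succ_of_le (Nat.min_le_right _ _)⟩ = g v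
      · rw [if_pos hz, if_pos hz, Finset.prod_mul_distrib]; ring
      · rw [if_neg hz, if_neg hz]; ring
    rw [Finset.sum_congr rfl fun z _ => lhs_eq z, ← Finset.mul_sum,
      sum_pi_prod (fun v (zv : Fin (2*s+1) → W) =>
        if zv ⟨min (localTime (truncPath p s) v) (2*s),
            Nat.lt_succ_of_le (Nat.min_le_right _ _)⟩ = g v then
          pathWeight Q (f₀ v) zv *
            stopBy r (extendPath zv) (localTime (truncPath p s') v) else 0)]
    have hfac : ∀ v : V, (∑ zv : Fin (2*s+1) → W,
        if zv ⟨min (localTime (truncPath p s) v) (2*s),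
            Nat.lt_succ_of_le (Nat.min_le_right _ _)⟩ = g v then
          pathWeight Q (f₀ v) zv *
            stopBy r (extendPath zv) (localTime (truncPath p s') v) else 0)
        = πH (g v) * Cval Q r (f₀ v) (localTime (truncPath p s') v) := by
      intro v
      exact key_T hQ hπ hr (f₀ v)
        (le_min (hmono p v) (le_trans (hmono p v) (hle2 v))) (Nat.min_le_right _ _) (g v)
    rw [Finset.prod_congr rfl fun v _ => hfac v]
    have rhs_eq : ∀ z : V → (Fin (2*s+1) → W),
        (pathWeight P x₀ p * ∏ v, pathWeight Q (f₀ v) (z v)) *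
            ∏ v, stopBy r (extendPath (z v)) (localTime (truncPath p s') v)
        = pathWeight P x₀ p * ∏ v, (pathWeight Q (f₀ v) (z v) *
            stopBy r (extendPath (z v)) (localTime (truncPath p s') v)) := by
      intro z
      rw [Finset.prod_mul_distrib]; ring
    rw [Finset.sum_congr rfl fun z _ => rhs_eq z, ← Finset.mul_sum,
      sum_pi_prod (fun v (zv : Fin (2*s+1) → W) =>
        pathWeight Q (f₀ v) zv * stopBy r (extendPath zv) (localTime (truncPath p s') v))]
    have hfac2 : ∀ v : V, (∑ zv : Fin (2*s+1) → W,
        pathWeight Q (f₀ v) zv * stopBy r (extendPath zv) (localTime (truncPath p s') v))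
        = Cval Q r (f₀ v) (localTime (truncPath p s') v) := by
      intro v
      exact key_C hQ hπ hr (f₀ v) (le_trans (hmono p v) (hle2 v))
    rw [Finset.prod_congr rfl fun v _ => hfac2 v, Finset.prod_mul_distrib]
    ring

lemma EqProb_factor (P : Matrix V V ℝ) {Q : Matrix W W ℝ} {πH : W → ℝ} {r : List W → ℝ}
    (hQ : IsTransitionMatrix Q) (hπ : IsStationaryDist Q πH) (hr : IsSST Q πH r)
    (f₀ : V → W) (x₀ : V) (s : ℕ) (g : V → W) (y : V) :
    tauDmdEqProb P Q r f₀ x₀ s g y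
      = (∏ v, πH (g v)) * tauDmdEqBase P Q r f₀ x₀ s y := by
  unfold tauDmdEqProb tauDmdEqBase
  have h1 : tauDmdLEProb P Q r f₀ x₀ s s g y
      = (∏ v, πH (g v)) * tauDmdLEBase P Q r f₀ x₀ s s y :=
    LEProb_factor P hQ hπ hr f₀ x₀ s s (fun p v => le_refl _) g y
  rcases Nat.eq_zero_or_pos s with hs | hs
  · subst hs
    simp only [if_pos rfl, h1, if_true]
    ring
  · obtain ⟨u, rfl⟩ : ∃ u, s = u + 1 := ⟨s - 1, by omega⟩
    have h2 : tauDmdLEProb P Q r f₀ x₀ (u+1) (u+1-1) g y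
        = (∏ v, πH (g v)) * tauDmdLEBase P Q r f₀ x₀ (u+1) (u+1-1) y := by
      refine LEProb_factor P hQ hπ hr f₀ x₀ (u+1) (u+1-1) (fun p v => ?_) g y
      have : truncPath p (u+1) = p := by
        funext i
        show p ⟨min i.val (u+1), _⟩ = p i
        congr 1
        ext
        simp [Nat.min_eq_left (Nat.le_of_lt_succ i.isLt)]
      rw [this]
      exact localTime_trunc_mono p v
    simp only [Nat.add_sub_cancel] at h2 ⊢
    rw [if_neg (by omega : ¬ u + 1 = 0), if_neg (by omega : ¬ u + 1 = 0), h1, h2]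
    ring

/-- Summing the lamp trajectories with pinned lamp values gives matrix powers. -/
lemma inner_z_pow {Q : Matrix W W ℝ} (hQ : IsTransitionMatrix Q)
    (g f : V → W) {NN : ℕ} (nn : V → ℕ) (hnn : ∀ v, nn v ≤ NN) (c : ℝ) :
    ∑ z : V → (Fin (NN+1) → W),
        (if (∀ v, z v ⟨nn v, by have := hnn v; omega⟩ = f v) then
          c * ∏ v, pathWeight Q (g v) (z v) else 0)
      = c * ∏ v, (Q ^ (nn v)) (g v) (f v) := by
  have step : ∀ z : V → (Fin (NN+1) → W),
      (if (∀ v, z v ⟨nn v, by have := hnn v; omega⟩ = f v) then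
        c * ∏ v, pathWeight Q (g v) (z v) else 0)
      = c * ∏ v, (if z v ⟨nn v, by have := hnn v; omega⟩ = f v then
          pathWeight Q (g v) (z v) else 0) := by
    intro z
    rw [← ite_forall_prod]
    by_cases hz : ∀ v, z v ⟨nn v, by have := hnn v; omega⟩ = f v
    · rw [if_pos hz, if_pos hz]
    · rw [if_neg hz, if_neg hz]; ring
  rw [Finset.sum_congr rfl fun z _ => step z, ← Finset.mul_sum,
    sum_pi_prod (fun v (zv : Fin (NN+1) → W) =>
      if zv ⟨nn v, by have := hnn v; omega⟩ = f v then pathWeight Q (g v) zv else 0)]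
  congr 1
  exact Finset.prod_congr rfl fun v _ => key_pow hQ (g v) (hnn v) (f v)

/-- Summing the lamp trajectories freely gives 1. -/
lemma inner_z_one {Q : Matrix W W ℝ} (hQ : IsTransitionMatrix Q)
    (g : V → W) {NN : ℕ} (c : ℝ) :
    ∑ z : V → (Fin (NN+1) → W), c * ∏ v, pathWeight Q (g v) (z v) = c := by
  rw [← Finset.mul_sum, sum_pi_prod (fun v (zv : Fin (NN+1) → W) => pathWeight Q (g v) zv)]
  rw [Finset.prod_congr rfl fun v _ => sum_pw_one hQ (g v) NN]
  simp

/-- Averaging the initial lamps over stationarity: the lamps stay stationary and the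
base-walk part factors out. -/
lemma baseStop_sum_g (P : Matrix V V ℝ) {Q : Matrix W W ℝ} {πH : W → ℝ}
    (hQ : IsTransitionMatrix Q) (hπ : IsStationaryDist Q πH)
    (rG : List V → ℝ) (y : V) (m : ℕ) (f : V → W) (x : V) :
    ∑ g : V → W, (∏ v, πH (g v)) * baseStopProb P Q rG g y m f x
      = (∏ v, πH (f v)) * stopAtProb P rG y m x := by
  unfold baseStopProb jointWeight lampAt stopAtProb
  rw [Finset.sum_congr rfl fun g (_ : g ∈ Finset.univ) => Finset.mul_sum _ _ _,
    Finset.sum_comm, Finset.mul_sum]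
  refine Finset.sum_congr rfl fun p _ => ?_
  by_cases hp : p (Fin.last m) = x
  swap
  · rw [Finset.sum_eq_zero fun g _ => by
      rw [Finset.mul_sum]
      exact Finset.sum_eq_zero fun z _ => by simp [hp]]
    simp [hp]
  · simp only [hp, true_and, if_true]
    set RA := ∏ k ∈ Finset.range m, (1 - rG (ruleHist (extendPath p) k)) with hRA
    set RB := rG (ruleHist (extendPath p) m) with hRB
    have hg : ∀ g : V → W,
        (∏ v, πH (g v)) * (∑ z : V → (Fin (2*m+1) → W),
          if (∀ v, z v ⟨min (localTime (truncPath p m) v) (2*m),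
              Nat.lt_succ_of_le (Nat.min_le_right _ _)⟩ = f v) then
            pathWeight P y p * (∏ v, pathWeight Q (g v) (z v)) * RA * RB else 0)
        = (pathWeight P y p * RA * RB) *
            ∏ v, (πH (g v) * (Q ^ (min (localTime (truncPath p m) v) (2*m))) (g v) (f v)) := by
      intro g
      have harr : ∀ z : V → (Fin (2*m+1) → W),
          (if (∀ v, z v ⟨min (localTime (truncPath p m) v) (2*m),
              Nat.lt_succ_of_le (Nat.min_le_right _ _)⟩ = f v) then
            pathWeight P y p * (∏ v, pathWeight Q (g v) (z v)) * RA * RB else 0)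
          = (if (∀ v, z v ⟨min (localTime (truncPath p m) v) (2*m),
              Nat.lt_succ_of_le (Nat.min_le_right _ _)⟩ = f v) then
            (pathWeight P y p * RA * RB) * ∏ v, pathWeight Q (g v) (z v) else 0) := by
        intro z
        by_cases hz : ∀ v, z v ⟨min (localTime (truncPath p m) v) (2*m),
            Nat.lt_succ_of_le (Nat.min_le_right _ _)⟩ = f v
        · rw [if_pos hz, if_pos hz]; ring
        · rw [if_neg hz, if_neg hz]
      rw [Finset.sum_congr rfl fun z _ => harr z,
        inner_z_pow hQ g f (fun v => min (localTime (truncPath p m) v) (2*m))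
          (fun v => Nat.min_le_right _ _) (pathWeight P y p * RA * RB),
        Finset.prod_mul_distrib]
      ring
    rw [Finset.sum_congr rfl fun g _ => hg g, ← Finset.mul_sum,
      sum_pi_prod (fun v (a : W) =>
        πH a * (Q ^ (min (localTime (truncPath p m) v) (2*m))) a (f v)),
      Finset.prod_congr rfl fun v _ => statPow hπ _ (f v)]
    ring

/-- Swapping a fourfold sum. -/
lemma sum4_swap {α β γ δ : Type*} [Fintype α] [Fintype β] [Fintype γ] [Fintype δ]
    (T : α → β → γ → δ → ℝ) :
    ∑ a : α, ∑ b : β, ∑ c : γ, ∑ d : δ, T a b c d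
      = ∑ c : γ, ∑ d : δ, ∑ a : α, ∑ b : β, T a b c d := by
  rw [Finset.sum_congr rfl fun a (_ : a ∈ Finset.univ) =>
    (Finset.sum_comm (s := Finset.univ) (t := Finset.univ)
      (f := fun b c => ∑ d : δ, T a b c d))]
  rw [Finset.sum_comm]
  refine Finset.sum_congr rfl fun c _ => ?_
  rw [Finset.sum_congr rfl fun a (_ : a ∈ Finset.univ) =>
    (Finset.sum_comm (s := Finset.univ) (t := Finset.univ)
      (f := fun b d => T a b c d))]
  rw [Finset.sum_comm]

/-- Total mass of `baseStopProb` over the final configuration. -/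
lemma baseStop_total (P : Matrix V V ℝ) {Q : Matrix W W ℝ}
    (hQ : IsTransitionMatrix Q)
    (rG : List V → ℝ) (g : V → W) (y : V) (m : ℕ) :
    ∑ f : V → W, ∑ x : V, baseStopProb P Q rG g y m f x
      = ∑ x' : V, stopAtProb P rG y m x' := by
  unfold baseStopProb jointWeight lampAt stopAtProb
  rw [sum4_swap (fun (f : V → W) (x : V) (p : Fin (m+1) → V) (z : V → Fin (2*m+1) → W) =>
    if (p (Fin.last m) = x ∧ ∀ v, z v ⟨min (localTime (truncPath p m) v) (2*m),
        Nat.lt_succ_of_le (Nat.min_le_right _ _)⟩ = f v) then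
      pathWeight P y p * (∏ v, pathWeight Q (g v) (z v)) *
        (∏ k ∈ Finset.range m, (1 - rG (ruleHist (extendPath p) k))) *
        rG (ruleHist (extendPath p) m)
    else 0),
    Finset.sum_comm (s := Finset.univ) (t := Finset.univ)
      (f := fun (x' : V) (p : Fin (m+1) → V) =>
        if p (Fin.last m) = x' then
          pathWeight P y p * (∏ k ∈ Finset.range m, (1 - rG (ruleHist (extendPath p) k))) *
            rG (ruleHist (extendPath p) m)
        else 0)]
  refine Finset.sum_congr rfl fun p _ => ?_
  have inner : ∀ z : V → (Fin (2*m+1) → W),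
      (∑ f : V → W, ∑ x : V,
        if (p (Fin.last m) = x ∧ ∀ v, z v ⟨min (localTime (truncPath p m) v) (2*m),
            Nat.lt_succ_of_le (Nat.min_le_right _ _)⟩ = f v) then
          pathWeight P y p * (∏ v, pathWeight Q (g v) (z v)) *
            (∏ k ∈ Finset.range m, (1 - rG (ruleHist (extendPath p) k))) *
            rG (ruleHist (extendPath p) m)
        else 0)
      = pathWeight P y p * (∏ v, pathWeight Q (g v) (z v)) *
          (∏ k ∈ Finset.range m, (1 - rG (ruleHist (extendPath p) k))) *
          rG (ruleHist (extendPath p) m) := by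
    intro z
    set A := pathWeight P y p * (∏ v, pathWeight Q (g v) (z v)) *
        (∏ k ∈ Finset.range m, (1 - rG (ruleHist (extendPath p) k))) *
        rG (ruleHist (extendPath p) m) with hA
    have hxsum : ∀ f : V → W,
        (∑ x : V, if (p (Fin.last m) = x ∧ ∀ v, z v ⟨min (localTime (truncPath p m) v) (2*m),
            Nat.lt_succ_of_le (Nat.min_le_right _ _)⟩ = f v) then A else 0)
        = if (∀ v, z v ⟨min (localTime (truncPath p m) v) (2*m),
            Nat.lt_succ_of_le (Nat.min_le_right _ _)⟩ = f v) then A else 0 := by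
      intro f
      by_cases hc : ∀ v, z v ⟨min (localTime (truncPath p m) v) (2*m),
          Nat.lt_succ_of_le (Nat.min_le_right _ _)⟩ = f v
      · simp only [hc, forall_true_iff, and_true, if_true]
        rw [Finset.sum_ite_eq Finset.univ (p (Fin.last m)) (fun _ : V => A)]
        simp
      · simp [hc]
    rw [Finset.sum_congr rfl fun f _ => hxsum f]
    have hfun : ∀ f : V → W, (∀ v, z v ⟨min (localTime (truncPath p m) v) (2*m),
        Nat.lt_succ_of_le (Nat.min_le_right _ _)⟩ = f v)
        ↔ (fun v => z v ⟨min (localTime (truncPath p m) v) (2*m),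
          Nat.lt_succ_of_le (Nat.min_le_right _ _)⟩) = f := by
      intro f; rw [funext_iff]
    rw [Finset.sum_congr rfl fun f _ => by rw [if_congr (hfun f) rfl rfl]]
    rw [Finset.sum_ite_eq Finset.univ _ (fun _ : V → W => A)]
    simp
  rw [Finset.sum_congr rfl fun z _ => inner z]
  have hz1 : ∀ z : V → (Fin (2*m+1) → W),
      pathWeight P y p * (∏ v, pathWeight Q (g v) (z v)) *
          (∏ k ∈ Finset.range m, (1 - rG (ruleHist (extendPath p) k))) *
          rG (ruleHist (extendPath p) m)
      = (pathWeight P y p *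
          (∏ k ∈ Finset.range m, (1 - rG (ruleHist (extendPath p) k))) *
          rG (ruleHist (extendPath p) m)) * ∏ v, pathWeight Q (g v) (z v) := by
    intro z; ring
  rw [Finset.sum_congr rfl fun z _ => hz1 z, inner_z_one hQ g]
  rw [Finset.sum_ite_eq Finset.univ (p (Fin.last m))
    (fun _ : V => pathWeight P y p *
      (∏ k ∈ Finset.range m, (1 - rG (ruleHist (extendPath p) k))) *
      rG (ruleHist (extendPath p) m))]
  simp [mul_assoc]

end AuxLemmas
end MarkovDefs

/-- `τ⋄₂ = τ⋄ + τ_G(X_{τ⋄})` is a strong stationary time for the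
generalized lamplighter chain:
`P[X⋄_t = (f,x), τ⋄₂ = t] = π_G(x) (∏_v π_H(f_v)) P[τ⋄₂ = t]`. -/
theorem tau_diamond_two_is_SST {V W : Type*} [Fintype V] [DecidableEq V] [Nonempty V]
    [Fintype W] [DecidableEq W] [Nonempty W]
    (G : SimpleGraph V) (Q : Matrix W W ℝ) (πH : W → ℝ)
    (hGconn : G.Connected) (hGreg : IsRegularGraph G)
    (hQ : IsTransitionMatrix Q) (hQirr : IsIrreducibleMC Q) (hQap : IsAperiodicMC Q)
    (hπH : IsStationaryDist Q πH) (hQrev : IsReversibleMC Q πH)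
    (r : List W → ℝ) (hr : IsSST Q πH r)
    (rG : List V → ℝ) (hrG : IsSST (lazySRW G) (unifDist V) rG)
    (f₀ : V → W) (x₀ : V) :
    ∀ (t : ℕ) (f : V → W) (x : V),
      tauDmd2EqProb (lazySRW G) Q r rG f₀ x₀ t f x
        = unifDist V x * (∏ v, πH (f v)) *
            ∑ f' : V → W, ∑ x' : V, tauDmd2EqProb (lazySRW G) Q r rG f₀ x₀ t f' x' := by
  intro t f x
  set P := lazySRW G with hPdef
  have hfac : ∀ (s : ℕ) (g : V → W) (y : V), tauDmdEqProb P Q r f₀ x₀ s g y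
      = (∏ v, πH (g v)) * tauDmdEqBase P Q r f₀ x₀ s y :=
    fun s g y => EqProb_factor P hQ hπH hr f₀ x₀ s g y
  have hL : ∀ (f' : V → W) (x' : V), tauDmd2EqProb P Q r rG f₀ x₀ t f' x'
      = ∑ s ∈ Finset.range (t+1), ∑ y : V,
          tauDmdEqBase P Q r f₀ x₀ s y *
            (∑ g : V → W, (∏ v, πH (g v)) * baseStopProb P Q rG g y (t-s) f' x') := by
    intro f' x'
    unfold tauDmd2EqProb
    refine Finset.sum_congr rfl fun s _ => ?_
    rw [Finset.sum_comm (s := Finset.univ) (t := Finset.univ)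
      (f := fun (g : V → W) (y : V) =>
        tauDmdEqProb P Q r f₀ x₀ s g y * baseStopProb P Q rG g y (t-s) f' x')]
    refine Finset.sum_congr rfl fun y _ => ?_
    rw [Finset.mul_sum]
    refine Finset.sum_congr rfl fun g _ => ?_
    rw [hfac s g y]
    ring
  have hg : ∀ (y : V) (m : ℕ) (f' : V → W) (x' : V),
      ∑ g : V → W, (∏ v, πH (g v)) * baseStopProb P Q rG g y m f' x'
        = (∏ v, πH (f' v)) * (unifDist V x' * ∑ x'', stopAtProb P rG y m x'') := by
    intro y m f' x'
    rw [baseStop_sum_g P hQ hπH rG y m f' x', hrG.2 y m x']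
  have h1 : ∀ (f' : V → W) (x' : V), tauDmd2EqProb P Q r rG f₀ x₀ t f' x'
      = (∏ v, πH (f' v)) * unifDist V x' *
          ∑ s ∈ Finset.range (t+1), ∑ y : V,
            tauDmdEqBase P Q r f₀ x₀ s y * ∑ x'', stopAtProb P rG y (t-s) x'' := by
    intro f' x'
    have e1 : tauDmd2EqProb P Q r rG f₀ x₀ t f' x'
        = ∑ s ∈ Finset.range (t+1), ∑ y : V, tauDmdEqBase P Q r f₀ x₀ s y *
            ((∏ v, πH (f' v)) * (unifDist V x' * ∑ x'', stopAtProb P rG y (t-s) x'')) := by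
      rw [hL f' x']
      exact Finset.sum_congr rfl fun s _ => Finset.sum_congr rfl fun y _ => by
        rw [hg y (t-s) f' x']
    rw [e1]
    conv_rhs => rw [Finset.mul_sum]
    refine Finset.sum_congr rfl fun s _ => ?_
    conv_rhs => rw [Finset.mul_sum]
    exact Finset.sum_congr rfl fun y _ => by ring
  have hs1 : ∑ f' : V → W, ∏ v, πH (f' v) = 1 := by
    rw [sum_pi_prod (fun (_ : V) (a : W) => πH a),
      Finset.prod_congr rfl fun v _ => hπH.2.1]
    simp
  have hs2 : ∑ x' : V, unifDist V x' = 1 := by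
    have hcard : (Fintype.card V : ℝ) ≠ 0 := Nat.cast_ne_zero.mpr Fintype.card_ne_zero
    simp only [unifDist, Finset.sum_const, Finset.card_univ, nsmul_eq_mul]
    exact mul_inv_cancel₀ hcard
  have habs : ∀ S : ℝ,
      (∑ f' : V → W, ∑ x' : V, (∏ v, πH (f' v)) * unifDist V x' * S) = S := by
    intro S
    have inner : ∀ f' : V → W,
        ∑ x' : V, (∏ v, πH (f' v)) * unifDist V x' * S = (∏ v, πH (f' v)) * S := by
      intro f'
      rw [Finset.sum_congr rfl fun x' (_ : x' ∈ Finset.univ) =>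
        (by ring : (∏ v, πH (f' v)) * unifDist V x' * S
          = ((∏ v, πH (f' v)) * S) * unifDist V x'), ← Finset.mul_sum, hs2, mul_one]
    rw [Finset.sum_congr rfl fun f' _ => inner f', ← Finset.sum_mul, hs1, one_mul]
  have hTot : ∑ f' : V → W, ∑ x' : V, tauDmd2EqProb P Q r rG f₀ x₀ t f' x'
      = ∑ s ∈ Finset.range (t+1), ∑ y : V,
          tauDmdEqBase P Q r f₀ x₀ s y * ∑ x'', stopAtProb P rG y (t-s) x'' := by
    rw [Finset.sum_congr rfl fun f' (_ : f' ∈ Finset.univ) =>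
      Finset.sum_congr rfl fun x' (_ : x' ∈ Finset.univ) => h1 f' x']
    exact habs _
  rw [hTot, h1 f x]
  ring
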